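/- Let y, z ∈ ℝ with (y,z) ≠ (0,0), and set x = y + z, R = √(x² + y² + z²) and τ = tanh(R/(2√2)) ∈ (0,1). Define the complex numbers N(x) = (√3·x + i(y − z))³ − 2√2·i·R³·τ and D(x) = 2√2·R³ + i·(√3·x + i(y − z))³·τ, and put J = N(x)/D(x) and J⁻ = N(−x)/D(−x) (same y, z, R, τ, with x replaced by −x). Then: D(x) ≠ 0 and D(−x) ≠ 0; |J| = 1; and J⁻ · J = −1. -/

import Mathlib

set_option maxHeartbeats 1000000 in
/-- with `x = y + z`, `R = √(x²+y²+z²)`, `τ = tanh(R/(2√2))`,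
`N(s) = (√3·s + i(y−z))³ − 2√2·i·R³·τ` and
`D(s) = 2√2·R³ + i·(√3·s + i(y−z))³·τ`: the denominators are nonzero,
`τ ∈ (0,1)`, `|J| = 1` for `J = N(x)/D(x)`, and `J(−x)·J(x) = −1`. -/
theorem stmt_19 (y z : ℝ) (hyz : (y, z) ≠ (0, 0))
    (x R τ : ℝ) (hx : x = y + z)
    (hR : R = Real.sqrt (x ^ 2 + y ^ 2 + z ^ 2))
    (hτ : τ = Real.tanh (R / (2 * Real.sqrt 2)))
    (N D : ℝ → ℂ)
    (hN : ∀ s : ℝ, N s =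
      ((Real.sqrt 3 * s : ℝ) + Complex.I * ((y - z : ℝ))) ^ 3
        - ((2 * Real.sqrt 2 * R ^ 3 * τ : ℝ)) * Complex.I)
    (hD : ∀ s : ℝ, D s =
      ((2 * Real.sqrt 2 * R ^ 3 : ℝ)) +
        Complex.I * ((Real.sqrt 3 * s : ℝ) + Complex.I * ((y - z : ℝ))) ^ 3 * (τ : ℝ)) :
    0 < τ ∧ τ < 1 ∧ D x ≠ 0 ∧ D (-x) ≠ 0 ∧
      ‖N x / D x‖ = 1 ∧
      (N (-x) / D (-x)) * (N x / D x) = -1 := by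
  have h2 : (0:ℝ) < Real.sqrt 2 := Real.sqrt_pos.mpr (by norm_num)
  have hS : (0:ℝ) < x ^ 2 + y ^ 2 + z ^ 2 := by
    have h : y ≠ 0 ∨ z ≠ 0 := by
      by_contra hc
      push_neg at hc
      exact hyz (by simp [hc.1, hc.2])
    rcases h with h | h <;> positivity
  have hRpos : 0 < R := hR ▸ Real.sqrt_pos.mpr hS
  have hR2 : R ^ 2 = x ^ 2 + y ^ 2 + z ^ 2 := by
    rw [hR]; exact Real.sq_sqrt hS.le
  -- τ bounds
  have hτpos : 0 < τ := by
    rw [hτ, Real.tanh_eq_sinh_div_cosh]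
    exact div_pos (Real.sinh_pos_iff.mpr (by positivity)) (Real.cosh_pos _)
  have hτlt : τ < 1 := by
    rw [hτ, Real.tanh_eq_sinh_div_cosh]
    exact (div_lt_one (Real.cosh_pos _)).mpr (Real.sinh_lt_cosh _)
  -- setup
  set a : ℝ := Real.sqrt 3 * x with ha
  set b : ℝ := y - z with hb
  set A : ℝ := 2 * Real.sqrt 2 * R ^ 3 with hA
  clear_value a b A
  have hApos : 0 < A := by rw [hA]; positivity
  have h3 : Real.sqrt 3 ^ 2 = 3 := Real.sq_sqrt (by norm_num)
  have hab : a ^ 2 + b ^ 2 = 2 * R ^ 2 := by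
    rw [ha, hb, mul_pow, h3, hR2, hx]; ring
  have hA2 : A ^ 2 = (a ^ 2 + b ^ 2) ^ 3 := by
    rw [hA, hab]
    have : Real.sqrt 2 ^ 2 = 2 := Real.sq_sqrt (by norm_num)
    nlinarith [this]
  set u : ℂ := ((a : ℂ) + Complex.I * (b : ℝ)) ^ 3 with hu
  clear_value u
  set p : ℝ := u.re with hp
  set q : ℝ := u.im with hq
  clear_value p q
  have hpq : p ^ 2 + q ^ 2 = A ^ 2 := by
    have hre : p = a ^ 3 - 3 * a * b ^ 2 := by
      rw [hp, hu]; simp [pow_succ, Complex.add_re, Complex.add_im, Complex.mul_re,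
        Complex.mul_im]; ring
    have him : q = 3 * a ^ 2 * b - b ^ 3 := by
      rw [hq, hu]; simp [pow_succ, Complex.add_re, Complex.add_im, Complex.mul_re,
        Complex.mul_im]; ring
    rw [hre, him, hA2]; ring
  -- N x and D x in terms of u
  have hNx : N x = u - (A * τ : ℝ) * Complex.I := by
    rw [hN, hu, ha, hb, hA]
  have hDx : D x = (A : ℝ) + Complex.I * u * (τ : ℝ) := by
    rw [hD, hu, ha, hb, hA]
  -- conjugation relations
  have hustar : ((-a : ℂ) + Complex.I * (b : ℝ)) ^ 3 = -(starRingEnd ℂ) u := by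
    rw [hu]
    have : (-a : ℂ) + Complex.I * (b : ℝ) = -((starRingEnd ℂ) ((a : ℂ) + Complex.I * (b : ℝ))) := by
      simp [Complex.conj_ofReal]; ring
    have h' : (-(starRingEnd ℂ) ((a : ℂ) + Complex.I * (b : ℝ))) ^ 3
        = -((starRingEnd ℂ) ((a : ℂ) + Complex.I * (b : ℝ))) ^ 3 := by ring
    rw [this, h', ← map_pow]
  have hNnx : N (-x) = -(starRingEnd ℂ) (N x) := by
    rw [hN, hN]
    have harg : ((Real.sqrt 3 * (-x) : ℝ) : ℂ) = (-a : ℂ) := by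
      rw [ha]; push_cast; ring
    rw [harg, hustar]
    rw [show ((Real.sqrt 3 * x : ℝ) : ℂ) = (a : ℂ) from by rw [ha], ← hu]
    simp [map_sub, Complex.conj_ofReal]
    try ring
  have hDnx : D (-x) = (starRingEnd ℂ) (D x) := by
    rw [hD, hD]
    have harg : ((Real.sqrt 3 * (-x) : ℝ) : ℂ) = (-a : ℂ) := by
      rw [ha]; push_cast; ring
    rw [harg, hustar]
    rw [show ((Real.sqrt 3 * x : ℝ) : ℂ) = (a : ℂ) from by rw [ha], ← hu]
    simp [map_add, map_mul, Complex.conj_ofReal]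
    try ring
  -- normSq computations
  have hnsN : Complex.normSq (N x) = p ^ 2 + (q - A * τ) ^ 2 := by
    rw [hNx]
    simp [Complex.normSq_apply, Complex.sub_re, Complex.sub_im, Complex.mul_re,
      Complex.mul_im, hp, hq]
    ring
  have hnsD : Complex.normSq (D x) = (A - τ * q) ^ 2 + (τ * p) ^ 2 := by
    rw [hDx]
    simp [Complex.normSq_apply, Complex.add_re, Complex.add_im, Complex.mul_re,
      Complex.mul_im, hp, hq]
    ring
  have hNS : Complex.normSq (N x) = Complex.normSq (D x) := by
    rw [hnsN, hnsD]; linear_combination (1 - τ ^ 2) * hpq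
  have hqA : q ≤ A := by nlinarith [hpq, sq_nonneg p, sq_nonneg (A + q), hApos]
  have hDpos : 0 < Complex.normSq (D x) := by
    have hAq : 0 < A - τ * q := by
      have h1 := mul_le_mul_of_nonneg_left hqA hτpos.le
      have h2' := mul_lt_mul_of_pos_right hτlt hApos
      nlinarith [h1, h2']
    rw [hnsD]
    nlinarith [sq_nonneg (τ * p), pow_pos hAq 2]
  have hDne : D x ≠ 0 := by
    intro h; rw [h] at hDpos; simp at hDpos
  have hDnxne : D (-x) ≠ 0 := by
    rw [hDnx]
    simpa using hDne
  have hNpos : 0 < Complex.normSq (N x) := hNS ▸ hDpos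
  have hNne : N x ≠ 0 := by
    intro h; rw [h] at hNpos; simp at hNpos
  refine ⟨hτpos, hτlt, hDne, hDnxne, ?_, ?_⟩
  · rw [norm_div]
    have : ‖N x‖ = ‖D x‖ := by
      rw [← Real.sqrt_sq (norm_nonneg (N x)), ← Real.sqrt_sq (norm_nonneg (D x)),
        ← Complex.normSq_eq_norm_sq, ← Complex.normSq_eq_norm_sq, hNS]
    rw [this, div_self (norm_ne_zero_iff.mpr hDne)]
  · rw [hNnx, hDnx, div_mul_div_comm]
    have h1 : -(starRingEnd ℂ) (N x) * N x = -(Complex.normSq (N x) : ℂ) := by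
      rw [neg_mul, ← Complex.normSq_eq_conj_mul_self]
    have h2' : (starRingEnd ℂ) (D x) * D x = (Complex.normSq (D x) : ℂ) := by
      rw [← Complex.normSq_eq_conj_mul_self]
    rw [h1, h2', hNS, neg_div, div_self (by exact_mod_cast hDpos.ne')]
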